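/- arXiv:2405.14569 — 5 statements merged into one kernel-verified Lean document; each statement's English description precedes it below -/
import Mathlib

section
/- Let b, d1 ≥ 1 be natural numbers and set n = b·d1. Let W ∈ ℤ^{b×b} be a circulant matrix with first column w ∈ ℤ^b (so W[i,j] = w[(i−j) mod b] for all i,j ∈ {0,…,b−1}), and let X ∈ ℤ^{b×d1}. Define ŵ ∈ ℤ^n by ŵ[i·d1] = w[i] for i ∈ {0,…,b−1} and ŵ[t] = 0 for all other indices t, and define x̂ ∈ ℤ^n by x̂[i·d1 + j] = X[i,j] for i ∈ {0,…,b−1}, j ∈ {0,…,d1−1}. Then the cyclic convolution ŷ = ŵ ⋆ x̂ ∈ ℤ^n satisfies ŷ[i·d1 + j] = (W·X)[i,j] for all i ∈ {0,…,b−1}, j ∈ {0,…,d1−1}. -/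
lemma sum_range_mul_aux {M : Type*} [AddCommMonoid M] (b d : ℕ) (f : ℕ → M) :
    ∑ s ∈ Finset.range (b * d), f s
      = ∑ k ∈ Finset.range b, ∑ l ∈ Finset.range d, f (k * d + l) := by
  induction b with
  | zero => simp
  | succ m ih =>
    rw [Finset.sum_range_succ, ← ih, Nat.succ_mul, Finset.sum_range_add]

/-- **CirEncode within a circulant block** (Theorem 1 of the paper).
Let `n = b * d1`. If `W` is a `b × b` circulant integer matrix with first column `w`
(`W[i,j] = w[(i-j) mod b]`), `X` is a `b × d1` integer matrix, `ŵ` encodes `w` at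
indices `i * d1` (zero elsewhere on `{0,…,n-1}`), and `x̂` encodes `X` row-major,
then the length-`n` cyclic convolution `ŷ = ŵ ⋆ x̂` satisfies
`ŷ[i*d1 + j] = (W·X)[i,j]`. -/
theorem cirencode_gemm
    (b d1 : ℕ) (hb : 1 ≤ b) (hd1 : 1 ≤ d1) (n : ℕ) (hn : n = b * d1)
    (w : ℕ → ℤ) (W : ℕ → ℕ → ℤ)
    (hW : ∀ i < b, ∀ j < b, W i j = w ((i + b - j) % b))
    (X : ℕ → ℕ → ℤ)
    (what xhat yhat : ℕ → ℤ)
    (hwhat : ∀ i < b, what (i * d1) = w i)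
    (hwhat0 : ∀ t < n, ¬ d1 ∣ t → what t = 0)
    (hxhat : ∀ i < b, ∀ j < d1, xhat (i * d1 + j) = X i j)
    (hyhat : ∀ t < n, yhat t = ∑ s ∈ Finset.range n, what ((t + n - s) % n) * xhat s) :
    ∀ i < b, ∀ j < d1,
      yhat (i * d1 + j) = ∑ k ∈ Finset.range b, W i k * X k j := by
  subst hn
  intro i hi j hj
  have hd1b : i * d1 + j < b * d1 := by
    have h1 : (i + 1) * d1 ≤ b * d1 := Nat.mul_le_mul_right d1 hi
    have h2 : (i + 1) * d1 = i * d1 + d1 := by ring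
    omega
  rw [hyhat _ hd1b, sum_range_mul_aux]
  apply Finset.sum_congr rfl
  intro k hk
  rw [Finset.mem_range] at hk
  rw [Finset.sum_eq_single_of_mem j (Finset.mem_range.mpr hj)]
  · have ha : (i + b) * d1 = i * d1 + b * d1 := add_mul i b d1
    have hs : (i + b - k) * d1 = (i + b) * d1 - k * d1 := Nat.sub_mul _ _ _
    have hk' : (k + 1) * d1 ≤ b * d1 := Nat.mul_le_mul_right d1 hk
    have hk'' : (k + 1) * d1 = k * d1 + d1 := by ring
    have h2 : i * d1 + j + b * d1 - (k * d1 + j) = (i + b - k) * d1 := by omega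
    rw [h2, Nat.mul_mod_mul_right, hwhat _ (Nat.mod_lt _ (by omega)),
      hxhat k hk j hj, hW i hi k hk]
  · intro l hl hlj
    rw [Finset.mem_range] at hl
    have hqr : ∃ q r, 0 < r ∧ r < d1 ∧
        i * d1 + j + b * d1 - (k * d1 + l) = q * d1 + r := by
      have ha : (i + b) * d1 = i * d1 + b * d1 := add_mul i b d1
      have hs : (i + b - k) * d1 = (i + b) * d1 - k * d1 := Nat.sub_mul _ _ _
      have hk' : (k + 1) * d1 ≤ b * d1 := Nat.mul_le_mul_right d1 hk
      have hk'' : (k + 1) * d1 = k * d1 + d1 := by ring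
      rcases Nat.lt_or_ge l j with h | h
      · exact ⟨i + b - k, j - l, by omega, by omega, by omega⟩
      · have hlj' : j < l := by omega
        have hs2 : (i + b - k - 1) * d1 = (i + b - k) * d1 - 1 * d1 :=
          Nat.sub_mul _ _ _
        have h1 : (1 : ℕ) * d1 = d1 := one_mul d1
        exact ⟨i + b - k - 1, d1 + j - l, by omega, by omega, by omega⟩
    obtain ⟨q, r, hr0, hrd, heq⟩ := hqr
    have hq : q % b < b := Nat.mod_lt _ (by omega)
    have hlt : q % b * d1 + r < b * d1 := by
      have h3 : (q % b + 1) * d1 ≤ b * d1 := Nat.mul_le_mul_right d1 hq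
      have h4 : (q % b + 1) * d1 = q % b * d1 + d1 := by ring
      omega
    have hdle : d1 ≤ b * d1 := Nat.le_mul_of_pos_left d1 (by omega)
    have hmod : (i * d1 + j + b * d1 - (k * d1 + l)) % (b * d1)
        = q % b * d1 + r := by
      rw [heq, Nat.add_mod, Nat.mul_mod_mul_right,
        Nat.mod_eq_of_lt (show r < b * d1 by omega), Nat.mod_eq_of_lt hlt]
    have hndvd : ¬ d1 ∣ (q % b * d1 + r) := by
      intro hdvd
      have : d1 ∣ r := (Nat.dvd_add_right (dvd_mul_left d1 (q % b))).mp hdvd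
      have := Nat.le_of_dvd hr0 this
      omega
    rw [hmod, hwhat0 _ hlt hndvd, zero_mul]
end

section
/- Let b, d1, M ≥ 1 and set n = b·d1. For each m ∈ {0,…,M−1}, let W_m ∈ ℤ^{b×b} be a circulant matrix with first column w_m ∈ ℤ^b (W_m[i,j] = w_m[(i−j) mod b]), and let X_m ∈ ℤ^{b×d1}. Define ŵ_m, x̂_m ∈ ℂ^n by ŵ_m[i·d1] = w_m[i] for i ∈ {0,…,b−1} with all other entries 0, and x̂_m[i·d1 + j] = X_m[i,j] for i ∈ {0,…,b−1}, j ∈ {0,…,d1−1}. Let ŷ_m = ŵ_m ⋆ x̂_m be the length-n cyclic convolution. Then: (a) for every m ∈ {0,…,M−1} and every k ∈ {0,…,n−1}, DFT(ŵ_m)[k] · DFT(x̂_m)[k] = DFT(ŷ_m)[k] — that is, the entrywise product of the concatenated vectors (DFT(ŵ_0) | … | DFT(ŵ_{M−1})) and (DFT(x̂_0) | … | DFT(x̂_{M−1})) in ℂ^{Mn} equals the concatenated vector (DFT(ŷ_0) | … | DFT(ŷ_{M−1})); and (b) for every m, (W_m · X_m)[i,j] = ŷ_m[i·d1 + j] for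 all i ∈ {0,…,b−1}, j ∈ {0,…,d1−1}. -/
private lemma sum_range_mul_decomp {α : Type*} [AddCommMonoid α] (f : ℕ → α) (b d : ℕ) :
    ∑ s ∈ Finset.range (b * d), f s
      = ∑ k ∈ Finset.range b, ∑ l ∈ Finset.range d, f (k * d + l) := by
  induction b with
  | zero => simp
  | succ b ih =>
    rw [Finset.sum_range_succ, ← ih, Nat.succ_mul, Finset.sum_range_add]

private lemma inv_mod_aux {n s : ℕ} (hs : s ≤ n) {r : ℕ} (hr : r < n) :
    ((r + s) % n + n - s) % n = r := by
  have h1 : (r + s) % n + n - s = (r + s) % n + (n - s) := by omega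
  rw [h1, Nat.mod_add_mod]
  have h2 : r + s + (n - s) = r + n := by omega
  rw [h2, Nat.add_mod_right, Nat.mod_eq_of_lt hr]

private lemma inv_mod_aux' {n s : ℕ} (hs : s ≤ n) {t : ℕ} (ht : t < n) :
    ((t + n - s) % n + s) % n = t := by
  rw [Nat.mod_add_mod]
  have h2 : t + n - s + s = t + n := by omega
  rw [h2, Nat.add_mod_right, Nat.mod_eq_of_lt ht]

/-- **CirEncode across circulant blocks** (Theorem 2 of the paper).
For `M` circulant GEMMs `Y_m = W_m · X_m` with circulant `W_m ∈ ℤ^{b×b}` and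
`X_m ∈ ℤ^{b×d1}`, encode each pair as `ŵ_m, x̂_m ∈ ℂ^n` (`n = b·d1`) as in Theorem 1
and let `ŷ_m = ŵ_m ⋆ x̂_m` be the cyclic convolution. Then
(a) entrywise, `DFT(ŵ_m)[k]·DFT(x̂_m)[k] = DFT(ŷ_m)[k]` for all `m < M`, `k < n`
(i.e. the entrywise product of the concatenated DFT vectors equals the concatenated
DFT of the outputs), and
(b) `(W_m · X_m)[i,j] = ŷ_m[i·d1 + j]`. -/
theorem cirencode_across_blocks
    (b d1 M : ℕ) (hb : 1 ≤ b) (hd1 : 1 ≤ d1) (hM : 1 ≤ M)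
    (n : ℕ) (hn : n = b * d1)
    (w : ℕ → ℕ → ℤ) (W : ℕ → ℕ → ℕ → ℤ)
    (hW : ∀ m < M, ∀ i < b, ∀ j < b, W m i j = w m ((i + b - j) % b))
    (X : ℕ → ℕ → ℕ → ℤ)
    (what xhat yhat : ℕ → ℕ → ℂ)
    (hwhat : ∀ m < M, ∀ i < b, what m (i * d1) = (w m i : ℂ))
    (hwhat0 : ∀ m < M, ∀ t < n, ¬ d1 ∣ t → what m t = 0)
    (hxhat : ∀ m < M, ∀ i < b, ∀ j < d1, xhat m (i * d1 + j) = (X m i j : ℂ))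
    (hyhat : ∀ m < M, ∀ t < n,
      yhat m t = ∑ s ∈ Finset.range n, what m ((t + n - s) % n) * xhat m s)
    (dft : (ℕ → ℂ) → ℕ → ℂ)
    (hdft : ∀ f : ℕ → ℂ, ∀ k < n, dft f k =
      ∑ j ∈ Finset.range n,
        f j * Complex.exp (-2 * Real.pi * Complex.I * (j : ℂ) * (k : ℂ) / (n : ℂ))) :
    (∀ m < M, ∀ k < n, dft (what m) k * dft (xhat m) k = dft (yhat m) k) ∧
    (∀ m < M, ∀ i < b, ∀ j < d1,
      ((∑ k ∈ Finset.range b, W m i k * X m k j : ℤ) : ℂ) = yhat m (i * d1 + j)) := by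
  have hnpos : 0 < n := by rw [hn]; exact Nat.mul_pos hb hd1
  have hn0 : (n : ℂ) ≠ 0 := Nat.cast_ne_zero.mpr hnpos.ne'
  constructor
  · -- part (a)
    intro m hm k hk
    set z : ℂ := Complex.exp (-2 * Real.pi * Complex.I * (k : ℂ) / (n : ℂ)) with hzdef
    have hE : ∀ j : ℕ,
        Complex.exp (-2 * Real.pi * Complex.I * (j : ℂ) * (k : ℂ) / (n : ℂ)) = z ^ j := by
      intro j
      rw [hzdef, ← Complex.exp_nat_mul]
      congr 1
      ring
    have hzn : z ^ n = 1 := by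
      rw [hzdef, ← Complex.exp_nat_mul]
      have h2 : (n : ℂ) * (-2 * Real.pi * Complex.I * (k : ℂ) / (n : ℂ))
          = ((-(k : ℤ) : ℤ) : ℂ) * (2 * Real.pi * Complex.I) := by
        push_cast
        field_simp
      rw [h2, Complex.exp_int_mul_two_pi_mul_I]
    have hmod : ∀ j : ℕ, z ^ (j % n) = z ^ j := by
      intro j
      conv_rhs => rw [← Nat.div_add_mod j n]
      rw [pow_add, pow_mul, hzn, one_pow, one_mul]
    rw [hdft _ k hk, hdft _ k hk, hdft _ k hk]
    simp only [hE]
    have h1 : ∀ t ∈ Finset.range n, yhat m t * z ^ t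
        = ∑ s ∈ Finset.range n, what m ((t + n - s) % n) * xhat m s * z ^ t := by
      intro t ht
      rw [hyhat m hm t (Finset.mem_range.mp ht), Finset.sum_mul]
    have key : ∀ s ∈ Finset.range n,
        (∑ t ∈ Finset.range n, what m ((t + n - s) % n) * xhat m s * z ^ t)
          = (∑ r ∈ Finset.range n, what m r * z ^ r) * (xhat m s * z ^ s) := by
      intro s hs
      have hs' := Finset.mem_range.mp hs
      rw [Finset.sum_mul]
      refine Finset.sum_nbij' (fun t => (t + n - s) % n) (fun r => (r + s) % n)
        (fun t _ => Finset.mem_range.mpr (Nat.mod_lt _ hnpos))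
        (fun r _ => Finset.mem_range.mpr (Nat.mod_lt _ hnpos))
        (fun t ht => inv_mod_aux' hs'.le (Finset.mem_range.mp ht))
        (fun r hr => inv_mod_aux hs'.le (Finset.mem_range.mp hr))
        (fun t ht => ?_)
      have hz : z ^ ((t + n - s) % n) * z ^ s = z ^ t := by
        rw [← pow_add, ← hmod, inv_mod_aux' hs'.le (Finset.mem_range.mp ht)]
      calc what m ((t + n - s) % n) * xhat m s * z ^ t
          = what m ((t + n - s) % n) * xhat m s * (z ^ ((t + n - s) % n) * z ^ s) := by
            rw [hz]
        _ = what m ((t + n - s) % n) * z ^ ((t + n - s) % n) * (xhat m s * z ^ s) := by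
            ring
    rw [Finset.sum_congr rfl h1, Finset.sum_comm, Finset.sum_congr rfl key,
      ← Finset.mul_sum]
  · -- part (b)
    intro m hm i hi j hj
    have hij : i * d1 + j < n := by
      rw [hn]
      calc i * d1 + j < i * d1 + d1 := by omega
        _ = (i + 1) * d1 := by ring
        _ ≤ b * d1 := Nat.mul_le_mul_right _ hi
    rw [hyhat m hm _ hij]
    subst hn
    rw [sum_range_mul_decomp]
    push_cast
    refine Finset.sum_congr rfl fun k hk => ?_
    have hk' := Finset.mem_range.mp hk
    rw [Finset.sum_eq_single_of_mem j (Finset.mem_range.mpr hj)]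
    · -- main term l = j
      have hpk : (i + b - k) + k = i + b := by omega
      have e1 : i * d1 + j + b * d1 - (k * d1 + j) = (i + b - k) * d1 := by
        apply Nat.sub_eq_of_eq_add
        calc i * d1 + j + b * d1 = ((i + b - k) + k) * d1 + j := by rw [hpk]; ring
          _ = (i + b - k) * d1 + (k * d1 + j) := by ring
      rw [e1, Nat.mul_mod_mul_right, hwhat m hm _ (Nat.mod_lt _ hb),
        hxhat m hm k hk' j hj, hW m hm i hi k hk']
    · -- other terms vanish
      intro l hl hlj
      have hl' := Finset.mem_range.mp hl
      obtain ⟨P, q, hq0, hqd, hT⟩ : ∃ P q, 0 < q ∧ q < d1 ∧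
          i * d1 + j + b * d1 - (k * d1 + l) = P * d1 + q := by
        rcases lt_or_gt_of_ne hlj with hlt | hgt
        · -- l < j
          refine ⟨i + b - k, j - l, by omega, by omega, ?_⟩
          have hpk : (i + b - k) + k = i + b := by omega
          have hq : (j - l) + l = j := by omega
          apply Nat.sub_eq_of_eq_add
          calc i * d1 + j + b * d1 = ((i + b - k) + k) * d1 + ((j - l) + l) := by
                rw [hpk, hq]; ring
            _ = ((i + b - k) * d1 + (j - l)) + (k * d1 + l) := by ring
        · -- j < l
          refine ⟨i + b - k - 1, d1 + j - l, by omega, by omega, ?_⟩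
          have hpk : (i + b - k - 1) + (k + 1) = i + b := by omega
          have hq : (d1 + j - l) + l = d1 + j := by omega
          apply Nat.sub_eq_of_eq_add
          calc i * d1 + j + b * d1 = ((i + b - k - 1) + (k + 1)) * d1 + j := by
                rw [hpk]; ring
            _ = (i + b - k - 1) * d1 + k * d1 + (d1 + j) := by ring
            _ = (i + b - k - 1) * d1 + k * d1 + ((d1 + j - l) + l) := by rw [hq]
            _ = ((i + b - k - 1) * d1 + (d1 + j - l)) + (k * d1 + l) := by ring
      have hlt : (i * d1 + j + b * d1 - (k * d1 + l)) % (b * d1) < b * d1 :=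
        Nat.mod_lt _ hnpos
      have hnd : ¬ d1 ∣ (i * d1 + j + b * d1 - (k * d1 + l)) % (b * d1) := by
        intro hdvd
        have hmm : (i * d1 + j + b * d1 - (k * d1 + l)) % (b * d1) % d1 = q := by
          rw [Nat.mod_mod_of_dvd _ (dvd_mul_left d1 b), hT, Nat.mul_add_mod',
            Nat.mod_eq_of_lt hqd]
        rw [Nat.mod_eq_zero_of_dvd hdvd] at hmm
        omega
      rw [hwhat0 m hm _ hlt hnd, zero_mul]
end

section
/- Let b, H, V, R ≥ 1 with R ≤ H and R ≤ V, and set n = b·H·V. Let K ∈ ℤ^{b×b×R×R} be a convolution kernel that is circulant in its two channel dimensions, i.e., K[i,l,m,h] = K[(i−l) mod b, 0, m, h] for all i,l ∈ {0,…,b−1} and m,h ∈ {0,…,R−1}, and let X ∈ ℤ^{b×H×V} be an input tensor. Define x̂ ∈ ℤ^n by x̂[i·H·V + j·V + k] = X[i,j,k] for i ∈ {0,…,b−1}, j ∈ {0,…,H−1}, k ∈ {0,…,V−1}, and define ŵ ∈ ℤ^n by ŵ[i·H·V + (V+1)(R−1) − m·V − h] = K[i,0,m,h] for i ∈ {0,…,b−1},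 m,h ∈ {0,…,R−1}, with all other entries 0. Then the length-n cyclic convolution ŷ = ŵ ⋆ x̂ satisfies, for all i ∈ {0,…,b−1}, j ∈ {0,…,H−R}, k ∈ {0,…,V−R}: ŷ[i·H·V + (V+1)(R−1) + j·V + k] = Y[i,j,k], where Y ∈ ℤ^{b×(H−R+1)×(V−R+1)} is the valid 2-D convolution output Y[i,j,k] = Σ_{l=0}^{b−1} Σ_{m=0}^{R−1} Σ_{h=0}^{R−1} K[i,l,m,h]·X[l, j+m, k+h]. -/
lemma sum_range_mul' (a c : ℕ) (f : ℕ → ℤ) :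
    ∑ s ∈ Finset.range (a*c), f s
      = ∑ p ∈ Finset.range a, ∑ q ∈ Finset.range c, f (p*c + q) := by
  induction a with
  | zero => simp
  | succ a ih =>
    rw [Finset.sum_range_succ, ← ih, Nat.succ_mul, Finset.sum_range_add]

lemma mod_mul_decomp (a r c d : ℕ) (hd : 0 < d) (hr : r < c) :
    (a*c + r) % (d*c) = (a % d)*c + r := by
  have h := Nat.div_add_mod a d
  have h1 : a*c + r = (a % d)*c + r + (d*c)*(a/d) := by
    calc a*c + r = (d*(a/d) + a % d)*c + r := by rw [h]
      _ = (a % d)*c + r + (d*c)*(a/d) := by ring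
  rw [h1, Nat.add_mul_mod_self_left]
  apply Nat.mod_eq_of_lt
  have h2 : a % d < d := Nat.mod_lt _ hd
  calc (a % d)*c + r < (a % d)*c + c := by omega
    _ = (a % d + 1)*c := by ring
    _ ≤ d*c := Nat.mul_le_mul_right _ (by omega)

lemma flat_inj {c p q p' q' : ℕ} (hq : q < c) (hq' : q' < c)
    (h : p*c + q = p'*c + q') : p = p' ∧ q = q' := by
  have hc : 0 < c := by omega
  have e1 : (p*c + q) % c = q := by rw [mul_comm p c, Nat.mul_add_mod]; exact Nat.mod_eq_of_lt hq
  have e2 : (p'*c + q') % c = q' := by rw [mul_comm p' c, Nat.mul_add_mod]; exact Nat.mod_eq_of_lt hq'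
  have hqq : q = q' := by rw [← e1, ← e2, h]
  constructor
  · have d1 : (p*c + q)/c = p := by
      rw [mul_comm p c, Nat.mul_add_div hc, Nat.div_eq_of_lt hq, add_zero]
    have d2 : (p'*c + q')/c = p' := by
      rw [mul_comm p' c, Nat.mul_add_div hc, Nat.div_eq_of_lt hq', add_zero]
    rw [← d1, ← d2, h]
  · exact hqq

lemma eqn_helper (H V l A i b j' p jr k' q kr ca cb : ℕ)
    (h1 : l + A + ca = i + b) (h2 : j' + p + cb = jr + ca*H) (h3 : k' + q = kr + cb*V) :
    l*(H*V) + (j'*V + k') + (A*(H*V) + (p*V + q)) = i*(H*V) + (jr*V + kr) + b*(H*V) := by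
  have h4 : (l + A + ca)*(H*V) = (i+b)*(H*V) := by rw [h1]
  have h5 : (j' + p + cb)*V = (jr + ca*H)*V := by rw [h2]
  ring_nf at h4 h5 ⊢
  linarith

lemma small_lt (H V p q : ℕ) (hp : p < H) (hq : q < V) : p*V + q < H*V := by
  calc p*V + q < p*V + V := by omega
    _ = (p+1)*V := by ring
    _ ≤ H*V := Nat.mul_le_mul_right _ (by omega)

/-- **CirEncode for a block circulant convolution** (Theorem 3 of the paper,
one circulant block, stride 1). Indices: `b` channels, spatial size `H × V`,
kernel size `R ≤ H, V`, `n = b·H·V`. The kernel `K` is circulant in its two channel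
dimensions: `K[i,l,m,h] = K[(i-l) mod b, 0, m, h]`. With the stated coefficient
encodings `x̂` and `ŵ`, the length-`n` cyclic convolution `ŷ = ŵ ⋆ x̂` satisfies
`ŷ[i·H·V + (V+1)(R-1) + j·V + k] = Y[i,j,k]` where `Y` is the valid 2-D
convolution output. -/
theorem cirencode_conv
    (b H V R : ℕ) (hb : 1 ≤ b) (hR : 1 ≤ R) (hRH : R ≤ H) (hRV : R ≤ V)
    (n : ℕ) (hn : n = b * H * V)
    (K : ℕ → ℕ → ℕ → ℕ → ℤ)
    (hK : ∀ i < b, ∀ l < b, ∀ m < R, ∀ h < R, K i l m h = K ((i + b - l) % b) 0 m h)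
    (X : ℕ → ℕ → ℕ → ℤ)
    (what xhat yhat : ℕ → ℤ)
    (hxhat : ∀ i < b, ∀ j < H, ∀ k < V, xhat (i * H * V + j * V + k) = X i j k)
    (hwhat : ∀ i < b, ∀ m < R, ∀ h < R,
      what (i * H * V + (V + 1) * (R - 1) - m * V - h) = K i 0 m h)
    (hwhat0 : ∀ t < n,
      (¬ ∃ i m h, i < b ∧ m < R ∧ h < R ∧
        t = i * H * V + (V + 1) * (R - 1) - m * V - h) → what t = 0)
    (hyhat : ∀ t < n, yhat t = ∑ s ∈ Finset.range n, what ((t + n - s) % n) * xhat s) :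
    ∀ i < b, ∀ j < H - R + 1, ∀ k < V - R + 1,
      yhat (i * H * V + (V + 1) * (R - 1) + j * V + k) =
        ∑ l ∈ Finset.range b, ∑ m ∈ Finset.range R, ∑ h ∈ Finset.range R,
          K i l m h * X l (j + m) (k + h) := by
  obtain ⟨R1, rfl⟩ : ∃ R1, R = R1 + 1 := ⟨R - 1, by omega⟩
  simp only [Nat.add_sub_cancel] at hwhat hwhat0 ⊢
  intro i hi j hj k hk
  have hb0 : 0 < b := hb
  have hjH : j + R1 < H := by omega
  have hkV : k + R1 < V := by omega
  have hn' : n = b*(H*V) := by rw [hn]; ring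
  set T := i * H * V + (V + 1) * R1 + j * V + k with hTdef
  have hTalt : T = i*(H*V) + ((j+R1)*V + (k+R1)) := by rw [hTdef]; ring
  have hTn : T < n := by
    rw [hTalt, hn']
    have h1 : (j+R1)*V + (k+R1) < H*V := small_lt H V _ _ hjH hkV
    calc i*(H*V) + ((j+R1)*V + (k+R1)) < i*(H*V) + H*V := by omega
      _ = (i+1)*(H*V) := by ring
      _ ≤ b*(H*V) := Nat.mul_le_mul_right _ (by omega)
  rw [hyhat T hTn, hn', sum_range_mul']
  refine Finset.sum_congr rfl fun l hl => ?_
  rw [sum_range_mul']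
  have hl' : l < b := Finset.mem_range.mp hl
  -- the key index computation, for arbitrary A p q fitting the decomposition
  have hidx : ∀ j' k' A p q : ℕ, p < H → q < V →
      (l*(H*V) + (j'*V + k')) + (A*(H*V) + (p*V + q)) = T + b*(H*V) →
      (T + b*(H*V) - (l*(H*V) + (j'*V + k'))) % (b*(H*V)) = (A % b)*(H*V) + (p*V + q) := by
    intro j' k' A p q hp hq hpq
    have hsub : T + b*(H*V) - (l*(H*V) + (j'*V + k')) = A*(H*V) + (p*V + q) :=
      Nat.sub_eq_of_eq_add (by linarith [hpq])
    rw [hsub]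
    exact mod_mul_decomp A (p*V + q) (H*V) b hb0 (small_lt H V p q hp hq)
  -- zero lemma for bad (j',k')
  have hzero : ∀ j' < H, ∀ k' < V, (j' < j ∨ j + R1 < j' ∨ k' < k ∨ k + R1 < k') →
      what ((T + b*(H*V) - (l*(H*V) + (j'*V + k'))) % (b*(H*V))) = 0 := by
    intro j' hj' k' hk' hbad
    obtain ⟨A, p, q, hpq, hpH, hqV, hbig⟩ : ∃ A p q,
        (l*(H*V) + (j'*V + k')) + (A*(H*V) + (p*V + q)) = T + b*(H*V) ∧
        p < H ∧ q < V ∧ (R1 < p ∨ R1 < q) := by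
      rcases le_or_gt k' (k+R1) with hk1 | hk1
      · rcases le_or_gt j' (j+R1) with hj1 | hj1
        · refine ⟨i + b - l, (j+R1) - j', (k+R1) - k', ?_, by omega, by omega, by omega⟩
          rw [hTalt]
          exact eqn_helper H V l (i+b-l) i b j' ((j+R1)-j') (j+R1) k' ((k+R1)-k') (k+R1) 0 0
            (by omega) (by omega) (by omega)
        · refine ⟨i + b - 1 - l, (j+R1) + H - j', (k+R1) - k', ?_, by omega, by omega, by omega⟩
          rw [hTalt]
          exact eqn_helper H V l (i+b-1-l) i b j' ((j+R1)+H-j') (j+R1) k' ((k+R1)-k') (k+R1) 1 0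
            (by omega) (by omega) (by omega)
      · rcases le_or_gt (j'+1) (j+R1) with hj1 | hj1
        · refine ⟨i + b - l, (j+R1) - 1 - j', (k+R1) + V - k', ?_, by omega, by omega, by omega⟩
          rw [hTalt]
          exact eqn_helper H V l (i+b-l) i b j' ((j+R1)-1-j') (j+R1) k' ((k+R1)+V-k') (k+R1) 0 1
            (by omega) (by omega) (by omega)
        · refine ⟨i + b - 1 - l, (j+R1) + H - 1 - j', (k+R1) + V - k', ?_, by omega, by omega, by omega⟩
          rw [hTalt]
          exact eqn_helper H V l (i+b-1-l) i b j' ((j+R1)+H-1-j') (j+R1) k' ((k+R1)+V-k') (k+R1) 1 1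
            (by omega) (by omega) (by omega)
    rw [hidx j' k' A p q hpH hqV hpq]
    apply hwhat0
    · rw [hn']
      have hAb : A % b < b := Nat.mod_lt _ hb0
      have h1 : p*V + q < H*V := small_lt H V p q hpH hqV
      calc (A % b)*(H*V) + (p*V + q) < (A % b)*(H*V) + H*V := by omega
        _ = (A % b + 1)*(H*V) := by ring
        _ ≤ b*(H*V) := Nat.mul_le_mul_right _ (by omega)
    · rintro ⟨i', m, h, hi', hm, hh, heq⟩
      have hmle : m ≤ R1 := by omega
      have hhle : h ≤ R1 := by omega
      have henc : i' * H * V + (V + 1) * R1 - m * V - h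
          = i'*(H*V) + ((R1-m)*V + (R1-h)) := by
        have hexp2 : i' * H * V + (V + 1) * R1
            = (i'*(H*V) + ((R1-m)*V + (R1-h)) + h) + m*V := by
          rw [show R1 - m = R1 - m from rfl]
          have e1 : (R1-m) + m = R1 := by omega
          have e2 : (R1-h) + h = R1 := by omega
          have e3 : ((R1-m) + m)*V = R1*V := by rw [e1]
          ring_nf at e3 ⊢
          linarith
        rw [hexp2, Nat.add_sub_cancel, Nat.add_sub_cancel]
      rw [henc] at heq
      have h1 : p*V + q < H*V := small_lt H V p q hpH hqV
      have h2 : (R1-m)*V + (R1-h) < H*V := small_lt H V _ _ (by omega) (by omega)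
      obtain ⟨-, heq2⟩ := flat_inj h1 h2 heq
      obtain ⟨hp2, hq2⟩ := flat_inj (c := V) (by omega) (by omega) heq2
      omega
  -- good value lemma
  have hgood : ∀ m' ≤ R1, ∀ h' ≤ R1,
      what ((T + b*(H*V) - (l*(H*V) + ((j+m')*V + (k+h')))) % (b*(H*V)))
        * xhat (l*(H*V) + ((j+m')*V + (k+h')))
      = K i l m' h' * X l (j+m') (k+h') := by
    intro m' hm' h' hh'
    have hpq : (l*(H*V) + ((j+m')*V + (k+h'))) + ((i+b-l)*(H*V) + ((R1-m')*V + (R1-h')))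
        = T + b*(H*V) := by
      rw [hTalt]
      exact eqn_helper H V l (i+b-l) i b (j+m') (R1-m') (j+R1) (k+h') (R1-h') (k+R1) 0 0
        (by omega) (by omega) (by omega)
    rw [hidx (j+m') (k+h') (i+b-l) (R1-m') (R1-h') (by omega) (by omega) hpq]
    have hAb : (i+b-l) % b < b := Nat.mod_lt _ hb0
    have hwv := hwhat ((i+b-l) % b) hAb m' (by omega) h' (by omega)
    have henc : ((i+b-l) % b) * H * V + (V + 1) * R1 - m' * V - h'
        = ((i+b-l) % b)*(H*V) + ((R1-m')*V + (R1-h')) := by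
      have hexp2 : ((i+b-l) % b) * H * V + (V + 1) * R1
          = (((i+b-l) % b)*(H*V) + ((R1-m')*V + (R1-h')) + h') + m'*V := by
        have e1 : (R1-m') + m' = R1 := by omega
        have e3 : ((R1-m') + m')*V = R1*V := by rw [e1]
        have e2 : (R1-h') + h' = R1 := by omega
        ring_nf at e3 ⊢
        linarith
      rw [hexp2, Nat.add_sub_cancel, Nat.add_sub_cancel]
    rw [← henc, hwv]
    have hx : l*(H*V) + ((j+m')*V + (k+h')) = l * H * V + (j+m') * V + (k+h') := by ring
    rw [hx, hxhat l hl' (j+m') (by omega) (k+h') (by omega)]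
    rw [hK i hi l hl' m' (by omega) h' (by omega)]
  -- assemble
  have hsubJ : Finset.Ico j (j + (R1+1)) ⊆ Finset.range H := by
    intro x hx
    simp only [Finset.mem_Ico] at hx
    exact Finset.mem_range.mpr (by omega)
  rw [← Finset.sum_subset hsubJ (by
    intro j' hj' hj'2
    simp only [Finset.mem_range] at hj'
    simp only [Finset.mem_Ico, not_and, not_le] at hj'2
    refine Finset.sum_eq_zero fun k' hk' => ?_
    rw [hzero j' hj' k' (Finset.mem_range.mp hk') (by omega)]
    ring)]
  rw [Finset.sum_Ico_eq_sum_range]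
  simp only [Nat.add_sub_cancel_left]
  refine Finset.sum_congr rfl fun m' hm' => ?_
  have hm'le : m' ≤ R1 := by
    have := Finset.mem_range.mp hm'; omega
  have hsubK : Finset.Ico k (k + (R1+1)) ⊆ Finset.range V := by
    intro x hx
    simp only [Finset.mem_Ico] at hx
    exact Finset.mem_range.mpr (by omega)
  rw [← Finset.sum_subset hsubK (by
    intro k' hk' hk'2
    simp only [Finset.mem_range] at hk'
    simp only [Finset.mem_Ico, not_and, not_le] at hk'2
    rw [hzero (j+m') (by omega) k' hk' (by omega)]
    ring)]
  rw [Finset.sum_Ico_eq_sum_range]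
  simp only [Nat.add_sub_cancel_left]
  refine Finset.sum_congr rfl fun h' hh' => ?_
  have hh'le : h' ≤ R1 := by
    have := Finset.mem_range.mp hh'; omega
  exact hgood m' hm'le h' hh'le
end

section
/- Let n, B, G ≥ 1 with n = B·G, let W ∈ R^{n×n} be a matrix over a commutative ring R, and let x ∈ R^n. For d ∈ {0,…,n−1}, write d = j·B + i with j ∈ {0,…,G−1} and i ∈ {0,…,B−1}, and define the pre-rotated diagonal ŵ_d ∈ R^n by ŵ_d[k] = W[(k − j·B) mod n, ((k − j·B) mod n + d) mod n] (i.e., ŵ_d = rot_{−jB}(diag_d(W))). Then W x = Σ_{j=0}^{G−1} rot_{jB}( Σ_{i=0}^{B−1} ŵ_{jB+i} ⊙ rot_i(x) ), where rot_d(v)[k] = v[(k+d) mod n] and ⊙ is entrywise multiplication of vectors. -/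
private lemma mod2 {n a : ℕ} (h0 : 0 < n) (h : a < 2 * n) :
    (a % n = a ∧ a < n) ∨ (a % n = a - n ∧ n ≤ a) := by
  rcases Nat.lt_or_ge a n with h1 | h1
  · exact Or.inl ⟨Nat.mod_eq_of_lt h1, h1⟩
  · refine Or.inr ⟨?_, h1⟩
    rw [Nat.mod_eq_sub_mod h1, Nat.mod_eq_of_lt (by omega)]

/-- **Correctness of the baby-step giant-step (BSGS) regrouping** (Appendix B,
Figure 6 of the paper). Let `n = B·G`. For `d = j·B + i` (`j < G`, `i < B`) let
`ŵ_d = rot_{-jB}(diag_d(W))`, i.e. `ŵ_d[k] = W[(k-jB) mod n, ((k-jB) mod n + d) mod n]`.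
Then `W·x = Σ_{j<G} rot_{jB}( Σ_{i<B} ŵ_{jB+i} ⊙ rot_i(x) )`, entrywise:
`(W·x)[k] = Σ_{j<G} Σ_{i<B} ŵ_{jB+i}[(k+jB) mod n] · x[((k+jB) mod n + i) mod n]`. -/
theorem bsgs_correctness
    {R : Type*} [CommRing R]
    (n B G : ℕ) (hB : 1 ≤ B) (hG : 1 ≤ G) (hn : n = B * G)
    (W : ℕ → ℕ → R) (x : ℕ → R)
    (what : ℕ → ℕ → R)
    (hwhat : ∀ d < n, ∀ k < n,
      what d k = W ((k + n - (d / B) * B) % n) (((k + n - (d / B) * B) % n + d) % n)) :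
    ∀ k < n,
      (∑ c ∈ Finset.range n, W k c * x c) =
        ∑ j ∈ Finset.range G, ∑ i ∈ Finset.range B,
          what (j * B + i) ((k + j * B) % n) * x (((k + j * B) % n + i) % n) := by
  intro k hk
  have hn0 : 0 < n := by omega
  have lhs_eq : (∑ c ∈ Finset.range n, W k c * x c)
      = ∑ d ∈ Finset.range n, W k ((k + d) % n) * x ((k + d) % n) := by
    refine Finset.sum_nbij' (i := fun c => (c + n - k) % n) (j := fun d => (k + d) % n)
      ?_ ?_ ?_ ?_ ?_
    · intro c hc
      simp only [Finset.mem_range] at *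
      exact Nat.mod_lt _ hn0
    · intro d hd
      simp only [Finset.mem_range] at *
      exact Nat.mod_lt _ hn0
    · intro c hc
      simp only [Finset.mem_range] at hc
      have hm : (c + n - k) % n < n := Nat.mod_lt _ hn0
      rcases mod2 hn0 (show c + n - k < 2 * n by omega) with ⟨h1, h1'⟩ | ⟨h1, h1'⟩ <;>
        rcases mod2 hn0 (show k + (c + n - k) % n < 2 * n by omega) with ⟨h2, h2'⟩ | ⟨h2, h2'⟩ <;>
        omega
    · intro d hd
      simp only [Finset.mem_range] at hd
      have hm : (k + d) % n < n := Nat.mod_lt _ hn0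
      rcases mod2 hn0 (show k + d < 2 * n by omega) with ⟨h1, h1'⟩ | ⟨h1, h1'⟩ <;>
        rcases mod2 hn0 (show (k + d) % n + n - k < 2 * n by omega) with ⟨h2, h2'⟩ | ⟨h2, h2'⟩ <;>
        omega
    · intro c hc
      simp only [Finset.mem_range] at hc
      have hm : (c + n - k) % n < n := Nat.mod_lt _ hn0
      have heq : (k + (c + n - k) % n) % n = c := by
        rcases mod2 hn0 (show c + n - k < 2 * n by omega) with ⟨h1, h1'⟩ | ⟨h1, h1'⟩ <;>
          rcases mod2 hn0 (show k + (c + n - k) % n < 2 * n by omega) with ⟨h2, h2'⟩ | ⟨h2, h2'⟩ <;>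
          omega
      rw [heq]
  rw [lhs_eq, ← Finset.sum_product']
  refine Finset.sum_nbij' (i := fun d => ((d / B, d % B) : ℕ × ℕ))
    (j := fun p => p.1 * B + p.2) ?_ ?_ ?_ ?_ ?_
  · intro d hd
    simp only [Finset.mem_range, Finset.mem_product] at *
    constructor
    · rw [Nat.div_lt_iff_lt_mul hB, mul_comm]; omega
    · exact Nat.mod_lt _ hB
  · intro p hp
    simp only [Finset.mem_range, Finset.mem_product] at *
    calc p.1 * B + p.2 < (p.1 + 1) * B := by rw [add_mul]; omega
    _ ≤ G * B := Nat.mul_le_mul_right _ hp.1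
    _ = n := by rw [hn, mul_comm]
  · intro d hd
    exact Nat.div_add_mod' d B
  · intro p hp
    simp only [Finset.mem_range, Finset.mem_product] at hp
    have h1 : (p.1 * B + p.2) / B = p.1 := by
      rw [mul_comm, Nat.mul_add_div (by omega), Nat.div_eq_of_lt hp.2, add_zero]
    have h2 : (p.1 * B + p.2) % B = p.2 := by
      rw [mul_comm, Nat.mul_add_mod, Nat.mod_eq_of_lt hp.2]
    rw [h1, h2]
  · intro d hd
    simp only [Finset.mem_range] at hd
    dsimp only
    have hdiv : d / B * B ≤ d := Nat.div_mul_le_self d B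
    have hjB : d / B * B < n := by omega
    have harg : (k + d / B * B) % n < n := Nat.mod_lt _ hn0
    have hd' : d / B * B + d % B = d := Nat.div_add_mod' d B
    rw [show d / B * B + d % B = d from hd', hwhat d hd _ harg]
    have hX : ((k + d / B * B) % n + n - d / B * B) % n = k := by
      rcases mod2 hn0 (show k + d / B * B < 2 * n by omega) with ⟨h1, h1'⟩ | ⟨h1, h1'⟩ <;>
        rcases mod2 hn0 (show (k + d / B * B) % n + n - d / B * B < 2 * n by omega)
          with ⟨h2, h2'⟩ | ⟨h2, h2'⟩ <;>
        omega
    rw [hX]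
    congr 2
    rw [Nat.mod_add_mod]
    congr 1
    omega
end

section
/- Let b ≥ 1 and let W, G ∈ ℝ^{b×b} be such that for every d ∈ {0,…,b−1}, S_d := Σ_{i=0}^{b−1} G[i,(i+d) mod b]² > 0. For a circulant matrix C ∈ ℝ^{b×b} define the weighted objective F(C) = Σ_{i=0}^{b−1} Σ_{j=0}^{b−1} G[i,j]²·(C[i,j] − W[i,j])². Then the unique minimizer of F over all circulant b×b matrices is the circulant matrix C* whose d-th generalized diagonal has the constant value t_d = ( Σ_{i=0}^{b−1} G[i,(i+d) mod b]²·W[i,(i+d) mod b] ) / S_d, i.e., C*[i,(i+d) mod b] = t_d for all i,d; that is, F(C*) ≤ F(C) for every circulant C, with equality if and only if C = C*. -/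
private lemma modsub (b x : ℕ) (hb : 0 < b) (hx : x < 2 * b) :
    x % b = if x < b then x else x - b := by
  split_ifs with h
  · exact Nat.mod_eq_of_lt h
  · rw [Nat.mod_eq_sub_mod (by omega), Nat.mod_eq_of_lt (by omega)]

private lemma inv1 (b i j : ℕ) (hb : 0 < b) (hi : i < b) (hj : j < b) :
    (i + (j + b - i) % b) % b = j := by
  rw [modsub b (j + b - i) hb (by omega)]
  split_ifs with h
  · rw [modsub b _ hb (by omega)]; split_ifs <;> omega
  · rw [modsub b _ hb (by omega)]; split_ifs <;> omega

private lemma inv2 (b i d : ℕ) (hb : 0 < b) (hi : i < b) (hd : d < b) :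
    ((i + d) % b + b - i) % b = d := by
  rw [modsub b (i + d) hb (by omega)]
  split_ifs with h
  · rw [modsub b _ hb (by omega)]; split_ifs <;> omega
  · rw [modsub b _ hb (by omega)]; split_ifs <;> omega

private lemma hdiag (b i d : ℕ) (hb : 0 < b) (hi : i < b) (hd : d < b) :
    (i + b - (i + d) % b) % b = (b - d) % b := by
  rw [modsub b (i + d) hb (by omega)]
  split_ifs with h
  · rw [modsub b _ hb (by omega), modsub b _ hb (by omega)]; split_ifs <;> omega
  · rw [modsub b _ hb (by omega), modsub b _ hb (by omega)]; split_ifs <;> omega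

private lemma negmod (b i j : ℕ) (hb : 0 < b) (hi : i < b) (hj : j < b) :
    (b - (i + b - j) % b) % b = (j + b - i) % b := by
  rw [modsub b (i + b - j) hb (by omega)]
  split_ifs with h
  · rw [modsub b _ hb (by omega), modsub b _ hb (by omega)]; split_ifs <;> omega
  · rw [modsub b _ hb (by omega), modsub b _ hb (by omega)]; split_ifs <;> omega

private lemma quad_min (s : Finset ℕ) (g w : ℕ → ℝ)
    (hS : 0 < ∑ i ∈ s, g i) (x : ℝ) :
    ∑ i ∈ s, g i * (x - w i) ^ 2
      = ∑ i ∈ s, g i * ((∑ i ∈ s, g i * w i) / (∑ i ∈ s, g i) - w i) ^ 2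
        + (∑ i ∈ s, g i) * (x - (∑ i ∈ s, g i * w i) / (∑ i ∈ s, g i)) ^ 2 := by
  have expand : ∀ y : ℝ, ∑ i ∈ s, g i * (y - w i) ^ 2
      = (∑ i ∈ s, g i) * y ^ 2 - 2 * y * (∑ i ∈ s, g i * w i)
        + ∑ i ∈ s, g i * (w i) ^ 2 := by
    intro y
    rw [Finset.sum_congr rfl (fun i _ =>
      (by ring : g i * (y - w i) ^ 2
        = y ^ 2 * g i - 2 * y * (g i * w i) + g i * (w i) ^ 2)),
      Finset.sum_add_distrib, Finset.sum_sub_distrib, ← Finset.mul_sum,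
      ← Finset.mul_sum]
    ring
  have hS' : (∑ i ∈ s, g i) ≠ 0 := ne_of_gt hS
  rw [expand, expand]
  field_simp
  ring

/-- **Loss-aware initialization for circulant matrices** (Section 3.3 and
Appendix E of the paper). Minimizing the gradient-squared-weighted objective
`F(C) = Σ_{i,j<b} G[i,j]²·(C[i,j] - W[i,j])²` over circulant matrices `C` has the
unique minimizer `C*` whose `d`-th generalized diagonal is constant equal to
`(Σ_i G[i,(i+d)%b]²·W[i,(i+d)%b]) / (Σ_i G[i,(i+d)%b]²)`. -/
theorem loss_aware_circulant_init
    (b : ℕ) (hb : 1 ≤ b) (W G : ℕ → ℕ → ℝ)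
    (hpos : ∀ d < b, 0 < ∑ i ∈ Finset.range b, (G i ((i + d) % b)) ^ 2)
    (Cstar : ℕ → ℕ → ℝ)
    (hCstar : ∀ i < b, ∀ d < b,
      Cstar i ((i + d) % b) =
        (∑ i' ∈ Finset.range b, (G i' ((i' + d) % b)) ^ 2 * W i' ((i' + d) % b)) /
          (∑ i' ∈ Finset.range b, (G i' ((i' + d) % b)) ^ 2))
    (F : (ℕ → ℕ → ℝ) → ℝ)
    (hF : ∀ C : ℕ → ℕ → ℝ,
      F C = ∑ i ∈ Finset.range b, ∑ j ∈ Finset.range b,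
        (G i j) ^ 2 * (C i j - W i j) ^ 2) :
    (∃ c : ℕ → ℝ, ∀ i < b, ∀ j < b, Cstar i j = c ((i + b - j) % b)) ∧
    (∀ C : ℕ → ℕ → ℝ,
      (∃ c : ℕ → ℝ, ∀ i < b, ∀ j < b, C i j = c ((i + b - j) % b)) →
      F Cstar ≤ F C ∧ (F Cstar = F C ↔ ∀ i < b, ∀ j < b, C i j = Cstar i j)) := by
  have hb0 : 0 < b := hb
  -- notation
  set t : ℕ → ℝ := fun d =>
    (∑ i' ∈ Finset.range b, (G i' ((i' + d) % b)) ^ 2 * W i' ((i' + d) % b)) /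
      (∑ i' ∈ Finset.range b, (G i' ((i' + d) % b)) ^ 2) with ht
  -- reindexing of inner sums
  have hbij : ∀ i < b, ∀ f : ℕ → ℝ,
      ∑ j ∈ Finset.range b, f j = ∑ d ∈ Finset.range b, f ((i + d) % b) := by
    intro i hi f
    refine Finset.sum_nbij' (fun j => (j + b - i) % b) (fun d => (i + d) % b)
      (fun a ha => Finset.mem_range.mpr (Nat.mod_lt _ hb0))
      (fun a ha => Finset.mem_range.mpr (Nat.mod_lt _ hb0))
      (fun a ha => inv1 b i a hb0 hi (Finset.mem_range.mp ha))
      (fun a ha => inv2 b i a hb0 hi (Finset.mem_range.mp ha))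
      (fun a ha => ?_)
    rw [inv1 b i a hb0 hi (Finset.mem_range.mp ha)]
  have hFeq : ∀ C : ℕ → ℕ → ℝ,
      F C = ∑ d ∈ Finset.range b, ∑ i ∈ Finset.range b,
        (G i ((i + d) % b)) ^ 2 * (C i ((i + d) % b) - W i ((i + d) % b)) ^ 2 := by
    intro C
    rw [hF, Finset.sum_congr rfl (fun i hi =>
      hbij i (Finset.mem_range.mp hi)
        (fun j => (G i j) ^ 2 * (C i j - W i j) ^ 2))]
    exact Finset.sum_comm
  -- value of Cstar along diagonals
  have hFstar : F Cstar = ∑ d ∈ Finset.range b, ∑ i ∈ Finset.range b,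
      (G i ((i + d) % b)) ^ 2 * (t d - W i ((i + d) % b)) ^ 2 := by
    rw [hFeq]
    refine Finset.sum_congr rfl fun d hd => Finset.sum_congr rfl fun i hi => ?_
    rw [hCstar i (Finset.mem_range.mp hi) d (Finset.mem_range.mp hd)]
  -- first conjunct: Cstar is circulant
  constructor
  · refine ⟨fun e => t ((b - e % b) % b), fun i hi j hj => ?_⟩
    have hd : (j + b - i) % b < b := Nat.mod_lt _ hb0
    have hj' : j = (i + (j + b - i) % b) % b := (inv1 b i j hb0 hi hj).symm
    show Cstar i j = t ((b - (i + b - j) % b % b) % b)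
    rw [Nat.mod_eq_of_lt (Nat.mod_lt _ hb0), negmod b i j hb0 hi hj]
    conv_lhs => rw [hj']
    exact hCstar i hi _ hd
  · intro C hC
    obtain ⟨c, hc⟩ := hC
    -- value of C along diagonals
    have hcd : ∀ i < b, ∀ d < b, C i ((i + d) % b) = c ((b - d) % b) := by
      intro i hi d hd
      rw [hc i hi _ (Nat.mod_lt _ hb0), hdiag b i d hb0 hi hd]
    have hFC : F C = F Cstar + ∑ d ∈ Finset.range b,
        (∑ i ∈ Finset.range b, (G i ((i + d) % b)) ^ 2) *
          (c ((b - d) % b) - t d) ^ 2 := by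
      rw [hFeq C, hFstar, ← Finset.sum_add_distrib]
      refine Finset.sum_congr rfl fun d hd => ?_
      have hd' := Finset.mem_range.mp hd
      rw [Finset.sum_congr rfl (fun i hi => by
        rw [hcd i (Finset.mem_range.mp hi) d hd'])]
      exact quad_min (Finset.range b) (fun i => (G i ((i + d) % b)) ^ 2)
        (fun i => W i ((i + d) % b)) (hpos d hd') (c ((b - d) % b))
    have hterm : ∀ d ∈ Finset.range b,
        0 ≤ (∑ i ∈ Finset.range b, (G i ((i + d) % b)) ^ 2) *
          (c ((b - d) % b) - t d) ^ 2 := fun d hd =>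
      mul_nonneg (le_of_lt (hpos d (Finset.mem_range.mp hd))) (sq_nonneg _)
    have hsum_nonneg : 0 ≤ ∑ d ∈ Finset.range b,
        (∑ i ∈ Finset.range b, (G i ((i + d) % b)) ^ 2) *
          (c ((b - d) % b) - t d) ^ 2 := Finset.sum_nonneg hterm
    constructor
    · rw [hFC]; linarith
    · constructor
      · intro hEq
        have hzero : ∑ d ∈ Finset.range b,
            (∑ i ∈ Finset.range b, (G i ((i + d) % b)) ^ 2) *
              (c ((b - d) % b) - t d) ^ 2 = 0 := by
          rw [hFC] at hEq; linarith
        have hall := (Finset.sum_eq_zero_iff_of_nonneg hterm).mp hzero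
        have hct : ∀ d < b, c ((b - d) % b) = t d := by
          intro d hd
          have := hall d (Finset.mem_range.mpr hd)
          have hSne : (∑ i ∈ Finset.range b, (G i ((i + d) % b)) ^ 2) ≠ 0 :=
            ne_of_gt (hpos d hd)
          have : (c ((b - d) % b) - t d) ^ 2 = 0 := by
            rcases mul_eq_zero.mp this with h | h
            · exact absurd h hSne
            · exact h
          have := pow_eq_zero_iff (n := 2) (by norm_num) |>.mp this
          linarith
        intro i hi j hj
        have hd : (j + b - i) % b < b := Nat.mod_lt _ hb0
        have hj' : j = (i + (j + b - i) % b) % b := (inv1 b i j hb0 hi hj).symm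
        have h1 : C i j = c ((b - (j + b - i) % b) % b) := by
          conv_lhs => rw [hj']
          exact hcd i hi _ hd
        have h2 : Cstar i j = t ((j + b - i) % b) := by
          conv_lhs => rw [hj']
          exact hCstar i hi _ hd
        rw [h1, h2, hct _ hd]
      · intro hCeq
        rw [hF C, hF Cstar]
        refine Eq.symm (Finset.sum_congr rfl fun i hi =>
          Finset.sum_congr rfl fun j hj => ?_)
        rw [hCeq i (Finset.mem_range.mp hi) j (Finset.mem_range.mp hj)]
end
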